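/- In the acyclic-edge-coloring walk, the action digraph is atomic: for every flaw f_C (C an even cycle of length ≥ 6) and every proper coloring τ with no bichromatic 4-cycle, there is at most one state σ ∈ f_C with τ ∈ A(C,σ); i.e., b_C^τ ≤ 1. -/
import Mathlib


/-- Atomicity of the acyclic-edge-coloring walk: let `C` be an even cycle of length
`k ≥ 6` with vertices `c 0, c 1, …` and edges `s(c i, c (i+1))`, and let the fixed
adjacent edges be `e₁ = s(c 0, c 1)` and `e₂ = s(c 1, c 2)`. If two colorings `σ, σ'`
both make `C` bichromatic (with alternating colors) and both agree with a coloring `τ`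
on every edge other than the recolored edges `s(c i, c (i+1))`, `i ∉ {0,1}`, then
`σ = σ'`; i.e. the prior state is uniquely recoverable from `τ` and `C`, so `b_C^τ ≤ 1`. -/
theorem stmt_19 {V P : Type*} [DecidableEq V] (k : ℕ) (hk6 : 6 ≤ k) (hke : Even k)
    (c : ZMod k → V) (hc : Function.Injective c)
    (σ σ' τ : Sym2 V → P)
    (hσ : ∃ a b : P, a ≠ b ∧
      ∀ i : ZMod k, σ s(c i, c (i + 1)) = if i.val % 2 = 0 then a else b)
    (hσ' : ∃ a b : P, a ≠ b ∧
      ∀ i : ZMod k, σ' s(c i, c (i + 1)) = if i.val % 2 = 0 then a else b)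
    (hagree : ∀ x : Sym2 V,
      (∀ i : ZMod k, i ≠ 0 → i ≠ 1 → x ≠ s(c i, c (i + 1))) → σ x = τ x)
    (hagree' : ∀ x : Sym2 V,
      (∀ i : ZMod k, i ≠ 0 → i ≠ 1 → x ≠ s(c i, c (i + 1))) → σ' x = τ x) :
    σ = σ' := by
  haveI : NeZero k := ⟨by omega⟩
  haveI : Fact (1 < k) := ⟨by omega⟩
  obtain ⟨a, b, hab, hA⟩ := hσ
  obtain ⟨a', b', hab', hA'⟩ := hσ'
  -- edge injectivity
  have edgeinj : ∀ i j : ZMod k, s(c i, c (i + 1)) = s(c j, c (j + 1)) → i = j := by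
    intro i j h
    rw [Sym2.eq_iff] at h
    rcases h with ⟨h1, h2⟩ | ⟨h1, h2⟩
    · exact hc h1
    · have e1 : i = j + 1 := hc h1
      have e2 : i + 1 = j := hc h2
      rw [e1] at e2
      have h2 : ((2 : ℕ) : ZMod k) = 0 := by push_cast; linear_combination e2
      rw [ZMod.natCast_eq_zero_iff] at h2
      have := Nat.le_of_dvd (by norm_num) h2
      omega
  have hv0 : (0 : ZMod k).val = 0 := ZMod.val_zero
  have hv1 : (1 : ZMod k).val = 1 := ZMod.val_one k
  have hne : ∀ x : Sym2 V, (∃ j : ZMod k, (j = 0 ∨ j = 1) ∧ x = s(c j, c (j + 1))) →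
      ∀ i : ZMod k, i ≠ 0 → i ≠ 1 → x ≠ s(c i, c (i + 1)) := by
    rintro x ⟨j, hj, rfl⟩ i hi0 hi1 h
    have := edgeinj j i h
    rcases hj with rfl | rfl
    · exact hi0 this.symm
    · exact hi1 this.symm
  -- the unchanged edges determine a, b
  have ha : a = a' := by
    have h0 : σ s(c 0, c (0 + 1)) = σ' s(c 0, c (0 + 1)) := by
      rw [hagree _ (hne _ ⟨0, Or.inl rfl, rfl⟩), hagree' _ (hne _ ⟨0, Or.inl rfl, rfl⟩)]
    rw [hA 0, hA' 0, hv0] at h0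
    simpa using h0
  have hb : b = b' := by
    have h1 : σ s(c 1, c (1 + 1)) = σ' s(c 1, c (1 + 1)) := by
      rw [hagree _ (hne _ ⟨1, Or.inr rfl, rfl⟩), hagree' _ (hne _ ⟨1, Or.inr rfl, rfl⟩)]
    rw [hA 1, hA' 1, hv1] at h1
    simpa using h1
  funext x
  by_cases hx : ∃ i : ZMod k, x = s(c i, c (i + 1))
  · obtain ⟨i, rfl⟩ := hx
    rw [hA i, hA' i, ha, hb]
  · push_neg at hx
    rw [hagree x (fun i _ _ => hx i), hagree' x (fun i _ _ => hx i)]
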